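/- Let k ∈ {1,…,N}, and let p and p̃ be extreme points of Q*_{A,a_k}, both different from e_k, such that cone({a_i : i ∈ I*_p}) is strictly contained in cone({a_i : i ∈ I*_{p̃}}). Then the inequality b_k ≤ bᵀp̃ is redundant in the system of extreme-point inequalities: every b ∈ ℝ^N satisfying b_i ≤ bᵀq for all i ∈ {1,…,N} and all extreme points q of Q*_{A,a_i} with (i,q) ≠ (k,p̃) also satisfies b_k ≤ bᵀp̃. -/

import Mathlib

open scoped RealInnerProductSpace

noncomputable section

/-- `Q*_{A,c} = {p ∈ ℝ^N : p ≥ 0, Aᵀp = c}`. -/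
def Qstar {d N : ℕ} (a : Fin N → EuclideanSpace ℝ (Fin d)) (c : EuclideanSpace ℝ (Fin d)) :
    Set (Fin N → ℝ) :=
  {p | (∀ i, 0 ≤ p i) ∧ ∑ i, p i • a i = c}

/-- `cone({a_i : i ∈ I})`: all nonnegative linear combinations of the `a_i`, `i ∈ I`. -/
def coneOf {d N : ℕ} (a : Fin N → EuclideanSpace ℝ (Fin d)) (I : Set (Fin N)) :
    Set (EuclideanSpace ℝ (Fin d)) :=
  {x | ∃ lam : Fin N → ℝ, (∀ i, 0 ≤ lam i) ∧ (∀ i, i ∉ I → lam i = 0) ∧ ∑ i, lam i • a i = x}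

/-- An extreme point cannot be perturbed in two opposite directions within the set. -/
lemma perturb_eq_zero {n : ℕ} {Q : Set (Fin n → ℝ)} {p z : Fin n → ℝ} {t : ℝ}
    (hp : p ∈ Q.extremePoints ℝ) (ht : t ≠ 0)
    (hx : p + t • z ∈ Q) (hy : p - t • z ∈ Q) : z = 0 := by
  have hseg : p ∈ openSegment ℝ (p + t • z) (p - t • z) := by
    refine ⟨1/2, 1/2, by norm_num, by norm_num, by norm_num, ?_⟩
    funext j
    simp only [Pi.add_apply, Pi.sub_apply, Pi.smul_apply, smul_eq_mul]
    ring
  have h := hp.2 hx hy hseg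
  have htz : t • z = 0 := by
    have h' := congrArg (· - p) h
    simpa using h'
  exact (smul_eq_zero.mp htz).resolve_left ht

theorem stmt_10 (d N : ℕ) (hd : 1 ≤ d) (hN : 1 ≤ N)
    (a : Fin N → EuclideanSpace ℝ (Fin d))
    (ha_inj : Function.Injective a) (ha_norm : ∀ i, ‖a i‖ = 1)
    (k : Fin N) (p ptil : Fin N → ℝ)
    (hp : p ∈ (Qstar a (a k)).extremePoints ℝ) (hpe : p ≠ Pi.single k 1)
    (hptil : ptil ∈ (Qstar a (a k)).extremePoints ℝ) (hptile : ptil ≠ Pi.single k 1)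
    (hcone : coneOf a {i | 0 < p i} ⊂ coneOf a {i | 0 < ptil i}) :
    ∀ b : Fin N → ℝ,
      (∀ i : Fin N, ∀ q ∈ (Qstar a (a i)).extremePoints ℝ,
        (i, q) ≠ (k, ptil) → b i ≤ ∑ j, b j * q j) →
      b k ≤ ∑ j, b j * ptil j := by
  intro b hb
  have hptilQ : ptil ∈ Qstar a (a k) := hptil.1
  have hptil0 : ∀ j, 0 ≤ ptil j := hptilQ.1
  have hpQ : p ∈ Qstar a (a k) := hp.1
  have hp0 : ∀ j, 0 ≤ p j := hpQ.1
  -- key "linear independence" lemma for the support of ptil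
  have lin : ∀ c : Fin N → ℝ, (∀ j, c j ≠ 0 → 0 < ptil j) → ∑ j, c j • a j = 0 → c = 0 := by
    intro c hsupp hsum
    have hne : (Finset.univ : Finset (Fin N)).Nonempty := ⟨⟨0, hN⟩, Finset.mem_univ _⟩
    set t : ℝ := Finset.univ.inf' hne (fun j => if c j = 0 then 1 else ptil j / |c j|) with ht
    have htpos : 0 < t := by
      rw [ht, Finset.lt_inf'_iff]
      intro j _
      split_ifs with h
      · norm_num
      · exact div_pos (hsupp j h) (abs_pos.mpr h)
    have hbound : ∀ j, c j ≠ 0 → t * |c j| ≤ ptil j := by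
      intro j hj
      have h1 : t ≤ ptil j / |c j| := by
        have := Finset.inf'_le (b := j) (fun j => if c j = 0 then 1 else ptil j / |c j|)
          (Finset.mem_univ j)
        rwa [if_neg hj] at this
      exact (le_div_iff₀ (abs_pos.mpr hj)).mp h1
    have habs : ∀ j, |t * c j| ≤ ptil j := by
      intro j
      by_cases hj : c j = 0
      · simp [hj, hptil0 j]
      · rw [abs_mul, abs_of_pos htpos]; exact hbound j hj
    have hsum' : ∀ ε : ℝ, ∑ j, (ptil j + ε * c j) • a j = a k := by
      intro ε
      have : ∑ j, (ptil j + ε * c j) • a j = ∑ j, ptil j • a j + ε • ∑ j, c j • a j := by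
        rw [Finset.smul_sum, ← Finset.sum_add_distrib]
        refine Finset.sum_congr rfl fun j _ => ?_
        rw [add_smul, smul_smul]
      rw [this, hsum, smul_zero, add_zero, hptilQ.2]
    have hx : ptil + t • c ∈ Qstar a (a k) := by
      constructor
      · intro j
        have := habs j
        have h2 := neg_abs_le (t * c j)
        show 0 ≤ ptil j + t * c j
        linarith
      · show ∑ j, (ptil + t • c) j • a j = a k
        have : ∀ j, (ptil + t • c) j = ptil j + t * c j := fun j => rfl
        simp_rw [this]
        exact hsum' t
    have hy : ptil - t • c ∈ Qstar a (a k) := by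
      constructor
      · intro j
        have := habs j
        have h2 := le_abs_self (t * c j)
        show 0 ≤ ptil j - t * c j
        linarith
      · show ∑ j, (ptil - t • c) j • a j = a k
        have : ∀ j, (ptil - t • c) j = ptil j + (-t) * c j := by
          intro j; show ptil j - t * c j = _; ring
        simp_rw [this]
        exact hsum' (-t)
    exact perturb_eq_zero hptil htpos.ne' hx hy
  -- p k = 0
  have hpk : p k = 0 := by
    by_contra hne0
    have hpkpos : 0 < p k := lt_of_le_of_ne (hp0 k) (Ne.symm hne0)
    set z : Fin N → ℝ := fun j => p j - (if j = k then 1 else 0) with hz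
    have hzsum : ∑ j, z j • a j = 0 := by
      have h1 : ∑ j, ((if j = k then (1:ℝ) else 0)) • a j = a k := by
        simp [ite_smul]
      have : ∑ j, z j • a j = ∑ j, p j • a j - ∑ j, (if j = k then (1:ℝ) else 0) • a j := by
        rw [← Finset.sum_sub_distrib]
        refine Finset.sum_congr rfl fun j _ => ?_
        rw [hz, sub_smul]
      rw [this, h1, hpQ.2, sub_self]
    set t : ℝ := min 1 (p k / (|p k - 1| + 1)) with htdef
    have habs1 : (0:ℝ) < |p k - 1| + 1 := by positivity
    have htpos : 0 < t := lt_min one_pos (div_pos hpkpos habs1)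
    have ht1 : t ≤ 1 := min_le_left _ _
    have htk : t * |p k - 1| ≤ p k := by
      have h1 : t ≤ p k / (|p k - 1| + 1) := min_le_right _ _
      have h2 : t * (|p k - 1| + 1) ≤ p k / (|p k - 1| + 1) * (|p k - 1| + 1) :=
        mul_le_mul_of_nonneg_right h1 habs1.le
      rw [div_mul_cancel₀ (p k) habs1.ne'] at h2
      nlinarith [htpos]
    have hnonneg : ∀ (ε : ℝ), |ε| ≤ t → ∀ j, 0 ≤ p j + ε * z j := by
      intro ε hε j
      by_cases hj : j = k
      · subst hj
        have hzk : z j = p j - 1 := by simp [hz]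
        rw [hzk]
        have h3 : |ε * (p j - 1)| ≤ t * |p j - 1| := by
          rw [abs_mul]
          exact mul_le_mul_of_nonneg_right hε (abs_nonneg _)
        have h4 := neg_abs_le (ε * (p j - 1))
        linarith
      · have hzj : z j = p j := by simp [hz, hj]
        rw [hzj]
        have h5 := neg_abs_le ε
        have h6 : |ε| * p j ≤ 1 * p j := by
          apply mul_le_mul_of_nonneg_right _ (hp0 j)
          linarith
        nlinarith [abs_nonneg ε, hp0 j, neg_abs_le (ε * p j), abs_mul ε (p j),
          abs_of_nonneg (hp0 j)]
    have hsum' : ∀ ε : ℝ, ∑ j, (p j + ε * z j) • a j = a k := by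
      intro ε
      have : ∑ j, (p j + ε * z j) • a j = ∑ j, p j • a j + ε • ∑ j, z j • a j := by
        rw [Finset.smul_sum, ← Finset.sum_add_distrib]
        refine Finset.sum_congr rfl fun j _ => ?_
        rw [add_smul, smul_smul]
      rw [this, hzsum, smul_zero, add_zero, hpQ.2]
    have hxm : p + t • z ∈ Qstar a (a k) := by
      constructor
      · intro j; exact hnonneg t (by rw [abs_of_pos htpos]) j
      · show ∑ j, (p + t • z) j • a j = a k
        have : ∀ j, (p + t • z) j = p j + t * z j := fun j => rfl
        simp_rw [this]; exact hsum' t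
    have hym : p - t • z ∈ Qstar a (a k) := by
      constructor
      · intro j
        have := hnonneg (-t) (by rw [abs_neg, abs_of_pos htpos]) j
        show 0 ≤ p j - t * z j
        linarith [this]
      · show ∑ j, (p - t • z) j • a j = a k
        have : ∀ j, (p - t • z) j = p j + (-t) * z j := by
          intro j; show p j - t * z j = _; ring
        simp_rw [this]; exact hsum' (-t)
    have hz0 : z = 0 := perturb_eq_zero hp htpos.ne' hxm hym
    apply hpe
    funext j
    have := congrFun hz0 j
    rw [hz] at this
    simp only [Pi.zero_apply, sub_eq_zero] at this
    rw [this, Pi.single_apply]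
  -- p ≠ ptil
  have hpptil : p ≠ ptil := by
    intro h
    rw [h] at hcone
    exact hcone.ne rfl
  -- main claim: for each i there is a nonneg lam supported on supp ptil with
  -- ∑ lam_j a_j = p_i • a_i and p_i b_i ≤ bᵀ lam
  have claim : ∀ i : Fin N, ∃ lam : Fin N → ℝ,
      (∀ j, 0 ≤ lam j) ∧ (∀ j, ¬ 0 < ptil j → lam j = 0) ∧
      (∑ j, lam j • a j) = p i • a i ∧ p i * b i ≤ ∑ j, b j * lam j := by
    intro i
    by_cases hpi : 0 < p i
    · have hai : a i ∈ coneOf a {i | 0 < p i} := by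
        refine ⟨fun j => if j = i then 1 else 0, ?_, ?_, ?_⟩
        · intro j; dsimp only; split_ifs <;> norm_num
        · intro j hj
          dsimp only
          rw [if_neg]
          intro h; subst h; exact hj hpi
        · simp [ite_smul]
      obtain ⟨lam0, h1, h2, h3⟩ := hcone.1 hai
      have h2' : ∀ j, ¬ 0 < ptil j → lam0 j = 0 := fun j hj => h2 j hj
      have hmem : lam0 ∈ Qstar a (a i) := ⟨h1, h3⟩
      have hext : lam0 ∈ (Qstar a (a i)).extremePoints ℝ := by
        refine ⟨hmem, ?_⟩
        intro x hxm y hym hseg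
        obtain ⟨s, t', hs, ht', hst, hxy⟩ := hseg
        have hzero : ∀ j, ¬ 0 < ptil j → x j = 0 ∧ y j = 0 := by
          intro j hj
          have h0 : lam0 j = 0 := h2' j hj
          have hxyj : s * x j + t' * y j = 0 := by
            have := congrFun hxy j
            simpa using this.trans h0
          have hxj : 0 ≤ x j := hxm.1 j
          have hyj : 0 ≤ y j := hym.1 j
          constructor
          · nlinarith
          · nlinarith
        have key : ∀ w : Fin N → ℝ, w ∈ Qstar a (a i) → (∀ j, ¬ 0 < ptil j → w j = 0) →
            w = lam0 := by
          intro w hw hwsupp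
          have hc := lin (fun j => w j - lam0 j) ?_ ?_
          · funext j
            have := congrFun hc j
            simp only [Pi.zero_apply, sub_eq_zero] at this
            exact this
          · intro j hj
            by_contra hcon
            exact hj (show w j - lam0 j = 0 by rw [hwsupp j hcon, h2' j hcon, sub_self])
          · have : ∑ j, (w j - lam0 j) • a j = ∑ j, w j • a j - ∑ j, lam0 j • a j := by
              rw [← Finset.sum_sub_distrib]
              exact Finset.sum_congr rfl fun j _ => sub_smul _ _ _
            rw [this, hw.2, h3, sub_self]
        exact key x hxm (fun j hj => (hzero j hj).1)
      have hik : i ≠ k := by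
        intro h; rw [h, hpk] at hpi; exact lt_irrefl 0 hpi
      have hbi : b i ≤ ∑ j, b j * lam0 j := by
        refine hb i lam0 hext ?_
        intro hcontra
        exact hik (congrArg Prod.fst hcontra)
      refine ⟨fun j => p i * lam0 j, ?_, ?_, ?_, ?_⟩
      · intro j; exact mul_nonneg hpi.le (h1 j)
      · intro j hj; show p i * lam0 j = 0; rw [h2' j hj, mul_zero]
      · have : ∑ j, (p i * lam0 j) • a j = p i • ∑ j, lam0 j • a j := by
          rw [Finset.smul_sum]
          exact Finset.sum_congr rfl fun j _ => (smul_smul _ _ _).symm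
        rw [this, h3]
      · have : ∑ j, b j * (p i * lam0 j) = p i * ∑ j, b j * lam0 j := by
          rw [Finset.mul_sum]
          exact Finset.sum_congr rfl fun j _ => by ring
        rw [this]
        exact mul_le_mul_of_nonneg_left hbi hpi.le
    · have hpi0 : p i = 0 := le_antisymm (not_lt.mp hpi) (hp0 i)
      exact ⟨0, by simp, by simp, by simp [hpi0], by simp [hpi0]⟩
  choose lam hlam0 hlamsupp hlamsum hlamineq using claim
  have hμsum : ∑ j, (∑ i, lam i j) • a j = a k := by
    have h1 : ∀ j : Fin N, (∑ i, lam i j) • a j = ∑ i, lam i j • a j :=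
      fun j => Finset.sum_smul
    simp_rw [h1]
    rw [Finset.sum_comm]
    simp_rw [hlamsum]
    exact hpQ.2
  have hμeq : ∀ j, (∑ i, lam i j) = ptil j := by
    have hc := lin (fun j => (∑ i, lam i j) - ptil j) ?_ ?_
    · intro j
      have h := congrFun hc j
      simp only [Pi.zero_apply] at h
      exact sub_eq_zero.mp h
    · intro j hj
      by_contra hcon
      have hpt0 : ptil j = 0 := le_antisymm (not_lt.mp hcon) (hptil0 j)
      have hμ0 : (∑ i, lam i j) = 0 := Finset.sum_eq_zero fun i _ => hlamsupp i j hcon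
      exact hj (show (∑ i, lam i j) - ptil j = 0 by rw [hμ0, hpt0, sub_self])
    · have h2 : ∑ j, ((∑ i, lam i j) - ptil j) • a j
          = ∑ j, (∑ i, lam i j) • a j - ∑ j, ptil j • a j := by
        rw [← Finset.sum_sub_distrib]
        exact Finset.sum_congr rfl fun j _ => sub_smul _ _ _
      rw [h2, hμsum, hptilQ.2, sub_self]
  have hbkp : b k ≤ ∑ j, b j * p j := by
    refine hb k p hp ?_
    intro hcontra
    exact hpptil (congrArg Prod.snd hcontra)
  calc b k ≤ ∑ j, b j * p j := hbkp
    _ = ∑ i, p i * b i := Finset.sum_congr rfl fun i _ => by ring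
    _ ≤ ∑ i, ∑ j, b j * lam i j := Finset.sum_le_sum fun i _ => hlamineq i
    _ = ∑ j, b j * ∑ i, lam i j := by
        rw [Finset.sum_comm]
        exact Finset.sum_congr rfl fun j _ => (Finset.mul_sum _ _ _).symm
    _ = ∑ j, b j * ptil j := Finset.sum_congr rfl fun j _ => by rw [hμeq j]
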